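/- Let G₁ be an r₁-regular graph on n₁ ≥ 2 vertices (r₁ ≥ 1) and G₂ arbitrary on n₂ ≥ 1 vertices. Then the Laplacian spectrum of G₁ ⋆ G₂ consists of: r₁ + μᵢ(G₂) with multiplicity n₁ for each i = 2,…,n₂ (where 0 = μ₁(G₂) ≤ … ≤ μ_{n₂}(G₂) are the Laplacian eigenvalues of G₂), together with, for each Laplacian eigenvalue μⱼ(G₁) of G₁, the two values ((n₂+1)r₁ + μⱼ(G₁) ± √(((n₂+1)r₁ + μⱼ(G₁))² − 4μⱼ(G₁)((2n₂+1)r₁ − n₂μⱼ(G₁))))/2. -/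

import Mathlib

open Matrix Polynomial BigOperators Kronecker

/-- The neighbourhood corona `G₁ ⋆ G₂` of two simple graphs. -/
def ncorona {V₁ V₂ : Type*} (G₁ : SimpleGraph V₁) (G₂ : SimpleGraph V₂) :
    SimpleGraph (V₁ ⊕ V₁ × V₂) where
  Adj := fun a b =>
    match a, b with
    | Sum.inl v, Sum.inl w => G₁.Adj v w
    | Sum.inl v, Sum.inr iu => G₁.Adj v iu.1
    | Sum.inr iu, Sum.inl w => G₁.Adj w iu.1
    | Sum.inr iu, Sum.inr jw => iu.1 = jw.1 ∧ G₂.Adj iu.2 jw.2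
  symm := by
    constructor
    rintro (v | ⟨i, u⟩) (w | ⟨j, z⟩) h
    · exact G₁.adj_symm h
    · exact h
    · exact h
    · exact ⟨h.1.symm, G₂.adj_symm h.2⟩
  loopless := by
    constructor
    rintro (v | ⟨i, u⟩) h
    · exact G₁.irrefl h
    · exact G₂.irrefl h.2

noncomputable instance {V₁ V₂ : Type*} (G₁ : SimpleGraph V₁) (G₂ : SimpleGraph V₂) :
    DecidableRel (ncorona G₁ G₂).Adj := Classical.decRel _

/-- The `M`-coronal `Γ_M(x) = 1ᵀ (xI - M)⁻¹ 1`, the sum of the entries of `(xI - M)⁻¹`. -/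
noncomputable def coronal {n : Type*} [Fintype n] [DecidableEq n]
    (M : Matrix n n ℝ) (x : ℝ) : ℝ :=
  ∑ i, ∑ j, (x • (1 : Matrix n n ℝ) - M)⁻¹ i j


set_option linter.unusedSectionVars false
set_option maxHeartbeats 1000000


lemma my_eval_charpoly {n : Type*} [Fintype n] [DecidableEq n] {R : Type*} [CommRing R]
    (M : Matrix n n R) (x : R) : M.charpoly.eval x = (x • (1 : Matrix n n R) - M).det := by
  rw [Matrix.charpoly, ← Polynomial.coe_evalRingHom, RingHom.map_det]
  congr 1
  ext i j
  by_cases h : i = j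
  · subst h; simp [Matrix.charmatrix_apply_eq, Matrix.one_apply]
  · simp [Matrix.charmatrix_apply_ne _ _ _ h, Matrix.one_apply, h]

lemma det_quadratic_complex {n : Type*} [Fintype n] [DecidableEq n] {m : ℕ}
    (L : Matrix n n ℂ) (ν : Fin m → ℂ)
    (hL : L.charpoly = ∏ j, (X - C (ν j))) (a b c : ℂ) (ha : a ≠ 0) :
    (a • (L * L) + b • L + c • (1 : Matrix n n ℂ)).det
      = ∏ j, (a * ν j ^ 2 + b * ν j + c) := by
  have hcard : Fintype.card n = m := by
    have h1 := congrArg natDegree hL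
    rw [Matrix.charpoly_natDegree_eq_dim] at h1
    rw [h1, Polynomial.natDegree_prod]
    · simp
    · intro j _; exact X_sub_C_ne_zero _
  obtain ⟨s, hs⟩ := IsAlgClosed.exists_pow_nat_eq (b ^ 2 - 4 * a * c) two_pos (k := ℂ)
  set ρ₁ : ℂ := (-b + s) / (2 * a) with hρ₁
  set ρ₂ : ℂ := (-b - s) / (2 * a) with hρ₂
  have hsum : a * (ρ₁ + ρ₂) = -b := by
    have h2a : (2 * a) ≠ 0 := mul_ne_zero two_ne_zero ha
    rw [hρ₁, hρ₂, ← add_div, mul_div_assoc', div_eq_iff h2a]; ring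
  have hprod : a * (ρ₁ * ρ₂) = c := by
    have h2a : (2 * a) ≠ 0 := mul_ne_zero two_ne_zero ha
    rw [hρ₁, hρ₂, div_mul_div_comm, mul_div_assoc', div_eq_iff (mul_ne_zero h2a h2a)]
    linear_combination -a * hs
  have expand : (L - ρ₁ • 1) * (L - ρ₂ • 1) = L * L - (ρ₁ + ρ₂) • L + (ρ₁ * ρ₂) • 1 := by
    simp only [sub_mul, mul_sub, smul_mul_assoc, mul_smul_comm, one_mul, mul_one, smul_smul]
    module
  have key : a • (L * L) + b • L + c • (1 : Matrix n n ℂ)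
      = a • ((L - ρ₁ • 1) * (L - ρ₂ • 1)) := by
    rw [expand, smul_add, smul_sub, smul_smul, smul_smul, hsum, hprod, neg_smul]
    abel
  have detlin : ∀ ρ : ℂ, (L - ρ • 1).det = ∏ j, (ν j - ρ) := by
    intro ρ
    have h1 : L - ρ • 1 = -(ρ • (1 : Matrix n n ℂ) - L) := by rw [neg_sub]
    rw [h1, Matrix.det_neg, ← my_eval_charpoly, hL]
    simp only [eval_prod, eval_sub, eval_X, eval_C, hcard]
    have hconst : ((-1 : ℂ)) ^ m = ∏ _j : Fin m, (-1 : ℂ) := by simp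
    rw [hconst, ← Finset.prod_mul_distrib]
    exact Finset.prod_congr rfl fun j _ => by ring
  have haconst : a ^ m = ∏ _j : Fin m, a := by simp
  rw [key, Matrix.det_smul, Matrix.det_mul, detlin, detlin, hcard, haconst,
    ← Finset.prod_mul_distrib, ← Finset.prod_mul_distrib]
  refine Finset.prod_congr rfl fun j _ => ?_
  linear_combination (-(ν j)) * hsum + hprod

lemma det_quadratic_real {n : Type*} [Fintype n] [DecidableEq n] {m : ℕ}
    (L : Matrix n n ℝ) (ν : Fin m → ℝ)
    (hL : L.charpoly = ∏ j, (X - C (ν j))) (a b c : ℝ) (ha : a ≠ 0) :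
    (a • (L * L) + b • L + c • (1 : Matrix n n ℝ)).det
      = ∏ j, (a * ν j ^ 2 + b * ν j + c) := by
  have f := Complex.ofRealHom
  set L' : Matrix n n ℂ := L.map Complex.ofRealHom with hL'
  have hchar : L'.charpoly = ∏ j, (X - C ((ν j : ℂ))) := by
    rw [hL', Matrix.charpoly_map, hL]
    simp [Polynomial.map_prod]
  have hmap : ((a • (L * L) + b • L + c • (1 : Matrix n n ℝ)).map Complex.ofRealHom)
      = (a : ℂ) • (L' * L') + (b : ℂ) • L' + (c : ℂ) • (1 : Matrix n n ℂ) := by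
    ext i j
    simp [Matrix.map_apply, Matrix.mul_apply, Matrix.one_apply, hL', apply_ite]
    push_cast
    ring_nf
    rcases eq_or_ne i j with h | h <;> simp [h]
  apply Complex.ofReal_injective
  calc ((a • (L * L) + b • L + c • (1 : Matrix n n ℝ)).det : ℂ)
      = ((a • (L * L) + b • L + c • (1 : Matrix n n ℝ)).map Complex.ofRealHom).det := by
        have := RingHom.map_det Complex.ofRealHom (a • (L * L) + b • L + c • (1 : Matrix n n ℝ))
        simpa [RingHom.mapMatrix_apply] using this
    _ = ∏ j, ((a:ℂ) * (ν j : ℂ) ^ 2 + (b:ℂ) * (ν j:ℂ) + (c:ℂ)) := by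
        rw [hmap]; exact det_quadratic_complex L' _ hchar _ _ _ (by exact_mod_cast ha)
    _ = ((∏ j, (a * ν j ^ 2 + b * ν j + c) : ℝ) : ℂ) := by push_cast; ring

lemma lap_root_nonneg {V : Type*} [Fintype V] [DecidableEq V] (G : SimpleGraph V)
    [DecidableRel G.Adj] {n : ℕ} (μ : Fin n → ℝ)
    (hchar : (G.lapMatrix ℝ).charpoly = ∏ i, (X - C (μ i))) (i : Fin n) : 0 ≤ μ i := by
  by_contra h
  push_neg at h
  have hev : ((G.lapMatrix ℝ).charpoly).eval (μ i) = 0 := by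
    rw [hchar, eval_prod]
    exact Finset.prod_eq_zero (Finset.mem_univ i) (by simp)
  rw [my_eval_charpoly] at hev
  have hpd : ((-(μ i)) • (1 : Matrix V V ℝ) + G.lapMatrix ℝ).PosDef := by
    apply Matrix.PosDef.add_posSemidef _ (SimpleGraph.posSemidef_lapMatrix ℝ G)
    rw [smul_one_eq_diagonal]
    exact Matrix.posDef_diagonal_iff.mpr (fun _ => by linarith)
  have heq : μ i • (1 : Matrix V V ℝ) - G.lapMatrix ℝ
      = -((-(μ i)) • (1 : Matrix V V ℝ) + G.lapMatrix ℝ) := by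
    rw [neg_add, neg_smul, neg_neg]; rfl
  rw [heq, Matrix.det_neg] at hev
  have hp := hpd.det_pos
  rcases mul_eq_zero.mp hev with h1 | h1
  · exact pow_ne_zero _ (by norm_num : (-1 : ℝ) ≠ 0) h1
  · linarith

lemma lap_mu_zero {V : Type*} [Fintype V] [DecidableEq V] (G : SimpleGraph V)
    [DecidableRel G.Adj] {n : ℕ} (hcard : Fintype.card V = n) (hn : 1 ≤ n)
    (μ : Fin n → ℝ) (hmono : Monotone μ)
    (hchar : (G.lapMatrix ℝ).charpoly = ∏ i, (X - C (μ i))) : μ ⟨0, hn⟩ = 0 := by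
  have hne : Nonempty V := by
    rw [← Fintype.card_pos_iff, hcard]; omega
  have hdet : (G.lapMatrix ℝ).det = 0 := by
    rw [← Matrix.exists_mulVec_eq_zero_iff]
    refine ⟨fun _ => 1, ?_, G.lapMatrix_mulVec_const_eq_zero⟩
    obtain ⟨v⟩ := hne
    intro hzero
    exact one_ne_zero (congrFun hzero v)
  have hev : ((G.lapMatrix ℝ).charpoly).eval 0 = 0 := by
    rw [my_eval_charpoly, zero_smul, zero_sub, Matrix.det_neg, hdet, mul_zero]
  rw [hchar, eval_prod] at hev
  obtain ⟨i, _, hi⟩ := Finset.prod_eq_zero_iff.mp hev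
  simp only [eval_sub, eval_X, eval_C, zero_sub, neg_eq_zero] at hi
  have h1 : μ ⟨0, hn⟩ ≤ μ i := hmono (by simp [Fin.le_def])
  have h2 := lap_root_nonneg G μ hchar ⟨0, hn⟩
  linarith [hi ▸ h1]

section NC
variable {V₁ V₂ : Type*} [Fintype V₁] [Fintype V₂] [DecidableEq V₁] [DecidableEq V₂]
  (G₁ : SimpleGraph V₁) (G₂ : SimpleGraph V₂) [DecidableRel G₁.Adj] [DecidableRel G₂.Adj]

@[simp] lemma ncorona_adj_ll (v w : V₁) : (ncorona G₁ G₂).Adj (Sum.inl v) (Sum.inl w) ↔ G₁.Adj v w := Iff.rfl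
@[simp] lemma ncorona_adj_lr (v : V₁) (ju : V₁ × V₂) :
    (ncorona G₁ G₂).Adj (Sum.inl v) (Sum.inr ju) ↔ G₁.Adj v ju.1 := Iff.rfl
@[simp] lemma ncorona_adj_rl (ju : V₁ × V₂) (w : V₁) :
    (ncorona G₁ G₂).Adj (Sum.inr ju) (Sum.inl w) ↔ G₁.Adj w ju.1 := Iff.rfl
@[simp] lemma ncorona_adj_rr (iu jw : V₁ × V₂) :
    (ncorona G₁ G₂).Adj (Sum.inr iu) (Sum.inr jw) ↔ iu.1 = jw.1 ∧ G₂.Adj iu.2 jw.2 := Iff.rfl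

lemma degree_as_sum {V : Type*} [Fintype V] (G : SimpleGraph V) [DecidableRel G.Adj] (v : V) :
    G.degree v = ∑ w, if G.Adj v w then 1 else 0 := by
  rw [SimpleGraph.degree, SimpleGraph.neighborFinset_eq_filter, Finset.card_filter]

lemma ncorona_degree_inl {n₂ r₁ : ℕ} (h₂ : Fintype.card V₂ = n₂)
    (hreg : G₁.IsRegularOfDegree r₁) (v : V₁) :
    (ncorona G₁ G₂).degree (Sum.inl v) = r₁ + r₁ * n₂ := by
  rw [degree_as_sum, Fintype.sum_sum_type]
  have h1 : ∑ w : V₁, (if (ncorona G₁ G₂).Adj (Sum.inl v) (Sum.inl w) then 1 else 0) = r₁ := by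
    rw [← hreg v, degree_as_sum]
    exact Finset.sum_congr rfl fun w _ => by simp
  have h2 : ∑ p : V₁ × V₂, (if (ncorona G₁ G₂).Adj (Sum.inl v) (Sum.inr p) then 1 else 0)
      = r₁ * n₂ := by
    rw [Fintype.sum_prod_type]
    have : ∀ j : V₁, ∑ _u : V₂, (if G₁.Adj v j then 1 else 0) = if G₁.Adj v j then n₂ else 0 := by
      intro j
      rcases Classical.em (G₁.Adj v j) with h | h <;> simp [h, h₂]
    calc ∑ j : V₁, ∑ u : V₂, (if (ncorona G₁ G₂).Adj (Sum.inl v) (Sum.inr (j, u)) then 1 else 0)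
        = ∑ j : V₁, (if G₁.Adj v j then n₂ else 0) := by
          refine Finset.sum_congr rfl fun j _ => ?_
          rw [← this j]
          exact Finset.sum_congr rfl fun u _ => by simp
      _ = (∑ j : V₁, if G₁.Adj v j then 1 else 0) * n₂ := by
          rw [Finset.sum_mul]
          exact Finset.sum_congr rfl fun j _ => by rcases Classical.em (G₁.Adj v j) with h|h <;> simp [h]
      _ = r₁ * n₂ := by rw [← degree_as_sum, hreg v]
  rw [h1, h2]

lemma ncorona_degree_inr (ju : V₁ × V₂) {r₁ : ℕ} (hreg : G₁.IsRegularOfDegree r₁) :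
    (ncorona G₁ G₂).degree (Sum.inr ju) = r₁ + G₂.degree ju.2 := by
  obtain ⟨j, u⟩ := ju
  rw [degree_as_sum, Fintype.sum_sum_type]
  have h1 : ∑ w : V₁, (if (ncorona G₁ G₂).Adj (Sum.inr (j,u)) (Sum.inl w) then 1 else 0) = r₁ := by
    rw [← hreg j, degree_as_sum]
    exact Finset.sum_congr rfl fun w _ => by simp [G₁.adj_comm]
  have h2 : ∑ p : V₁ × V₂, (if (ncorona G₁ G₂).Adj (Sum.inr (j,u)) (Sum.inr p) then 1 else 0)
      = G₂.degree u := by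
    rw [Fintype.sum_prod_type, degree_as_sum]
    rw [Finset.sum_eq_single j]
    · exact Finset.sum_congr rfl fun w _ => by simp
    · intro b _ hb
      apply Finset.sum_eq_zero
      intro w _
      simp [Ne.symm hb]
    · simp
  rw [h1, h2]

open Kronecker in
lemma ncorona_block (n₂ r₁ : ℕ) (h₂ : Fintype.card V₂ = n₂)
    (hreg : G₁.IsRegularOfDegree r₁) (x : ℝ) :
    x • (1 : Matrix (V₁ ⊕ V₁ × V₂) (V₁ ⊕ V₁ × V₂) ℝ) - (ncorona G₁ G₂).lapMatrix ℝ
    = Matrix.fromBlocks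
        ((x - (1 + n₂) * r₁) • (1 : Matrix V₁ V₁ ℝ) + G₁.adjMatrix ℝ)
        (Matrix.of fun v (ju : V₁ × V₂) => (G₁.adjMatrix ℝ) v ju.1)
        (Matrix.of fun (ju : V₁ × V₂) w => (G₁.adjMatrix ℝ) ju.1 w)
        ((1 : Matrix V₁ V₁ ℝ) ⊗ₖ ((x - r₁) • (1 : Matrix V₂ V₂ ℝ) - G₂.lapMatrix ℝ)) := by
  ext i j
  rcases i with v | ⟨i, u⟩ <;> rcases j with w | ⟨j, z⟩
  · by_cases h : v = w
    · subst h
      simp [SimpleGraph.lapMatrix, SimpleGraph.degMatrix, Matrix.one_apply,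
        ncorona_degree_inl G₁ G₂ h₂ hreg v]
      push_cast; ring
    · simp [SimpleGraph.lapMatrix, SimpleGraph.degMatrix, Matrix.one_apply, h]
  · simp [SimpleGraph.lapMatrix, SimpleGraph.degMatrix]
  · simp [SimpleGraph.lapMatrix, SimpleGraph.degMatrix, G₁.adj_comm]
  · by_cases hij : i = j
    · subst hij
      by_cases huz : u = z
      · subst huz
        simp [SimpleGraph.lapMatrix, SimpleGraph.degMatrix, Matrix.one_apply,
          ncorona_degree_inr G₁ G₂ (i,u) hreg]
        push_cast; ring
      · simp [SimpleGraph.lapMatrix, SimpleGraph.degMatrix, Matrix.one_apply, huz,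
          Prod.ext_iff]
    · simp [SimpleGraph.lapMatrix, SimpleGraph.degMatrix, Matrix.one_apply, hij,
        Prod.ext_iff]

open Kronecker in
lemma kron_one_inv (M : Matrix V₂ V₂ ℝ) (h : IsUnit M.det) :
    ((1 : Matrix V₁ V₁ ℝ) ⊗ₖ M)⁻¹ = (1 : Matrix V₁ V₁ ℝ) ⊗ₖ M⁻¹ := by
  apply Matrix.inv_eq_right_inv
  rw [← Matrix.mul_kronecker_mul, Matrix.one_mul, Matrix.mul_nonsing_inv _ h,
    Matrix.one_kronecker_one]

open Kronecker in
lemma BDC_eq (N : Matrix V₂ V₂ ℝ) :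
    (Matrix.of fun v (ju : V₁ × V₂) => (G₁.adjMatrix ℝ) v ju.1)
      * ((1 : Matrix V₁ V₁ ℝ) ⊗ₖ N)
      * (Matrix.of fun (ju : V₁ × V₂) w => (G₁.adjMatrix ℝ) ju.1 w)
    = (∑ u, ∑ w, N u w) • (G₁.adjMatrix ℝ * G₁.adjMatrix ℝ) := by
  ext v w
  simp only [Matrix.mul_apply, Matrix.smul_apply, Matrix.of_apply, Matrix.kroneckerMap_apply,
    Matrix.one_apply, Fintype.sum_prod_type, smul_eq_mul]
  have inner : ∀ (j : V₁) (z : V₂),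
      (∑ j' : V₁, ∑ u' : V₂, G₁.adjMatrix ℝ v j' * ((if j' = j then (1:ℝ) else 0) * N u' z))
      = G₁.adjMatrix ℝ v j * ∑ u', N u' z := by
    intro j z
    rw [Finset.sum_eq_single j]
    · rw [← Finset.mul_sum]
      exact congrArg _ (Finset.sum_congr rfl fun u' _ => by simp)
    · intro b _ hb
      apply Finset.sum_eq_zero
      intro u' _
      simp [hb]
    · simp
  calc ∑ j, ∑ z, (∑ j', ∑ u', G₁.adjMatrix ℝ v j' * ((if j' = j then (1:ℝ) else 0) * N u' z))
        * G₁.adjMatrix ℝ j w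
      = ∑ j, ∑ z, (G₁.adjMatrix ℝ v j * ∑ u', N u' z) * G₁.adjMatrix ℝ j w := by
        exact Finset.sum_congr rfl fun j _ => Finset.sum_congr rfl fun z _ => by rw [inner]
    _ = ∑ j, (∑ u, ∑ z, N u z) * (G₁.adjMatrix ℝ v j * G₁.adjMatrix ℝ j w) := by
        refine Finset.sum_congr rfl fun j _ => ?_
        have h3 : ∀ z, (G₁.adjMatrix ℝ v j * ∑ u', N u' z) * G₁.adjMatrix ℝ j w
            = (∑ u', N u' z) * (G₁.adjMatrix ℝ v j * G₁.adjMatrix ℝ j w) := fun z => by ring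
        rw [Finset.sum_congr rfl fun z _ => h3 z, ← Finset.sum_mul, Finset.sum_comm]
    _ = (∑ u, ∑ z, N u z) * ∑ j, G₁.adjMatrix ℝ v j * G₁.adjMatrix ℝ j w := by
        rw [Finset.mul_sum]

lemma adj_eq_of_regular {r₁ : ℕ} (hreg : G₁.IsRegularOfDegree r₁) :
    G₁.adjMatrix ℝ = (r₁ : ℝ) • (1 : Matrix V₁ V₁ ℝ) - G₁.lapMatrix ℝ := by
  ext v w
  by_cases h : v = w
  · subst h
    simp [SimpleGraph.lapMatrix, SimpleGraph.degMatrix, Matrix.one_apply, hreg v]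
  · simp [SimpleGraph.lapMatrix, SimpleGraph.degMatrix, Matrix.one_apply, h]

lemma schur_form {r₁ n₂ : ℕ} (hreg : G₁.IsRegularOfDegree r₁) (x S : ℝ) :
    ((x - (1 + n₂) * r₁) • (1 : Matrix V₁ V₁ ℝ) + G₁.adjMatrix ℝ)
      - S • (G₁.adjMatrix ℝ * G₁.adjMatrix ℝ)
    = (-S) • (G₁.lapMatrix ℝ * G₁.lapMatrix ℝ) + (2 * S * r₁ - 1) • G₁.lapMatrix ℝ
      + (x - (1 + n₂) * r₁ + r₁ - S * r₁ ^ 2) • (1 : Matrix V₁ V₁ ℝ) := by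
  rw [adj_eq_of_regular G₁ hreg]
  simp only [sub_mul, mul_sub, smul_mul_assoc, mul_smul_comm, one_mul, mul_one, smul_smul,
    smul_sub, smul_add]
  match_scalars <;> ring

lemma inv_entry_sum (t : ℝ) (ht : t ≠ 0)
    (hdet : IsUnit ((t • (1 : Matrix V₂ V₂ ℝ) - G₂.lapMatrix ℝ)).det) :
    ∑ u, ∑ w, (t • (1 : Matrix V₂ V₂ ℝ) - G₂.lapMatrix ℝ)⁻¹ u w
      = (Fintype.card V₂ : ℝ) * t⁻¹ := by
  set M : Matrix V₂ V₂ ℝ := t • (1 : Matrix V₂ V₂ ℝ) - G₂.lapMatrix ℝ with hM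
  have h1 : M *ᵥ (fun _ => (1:ℝ)) = fun _ => t := by
    rw [hM, Matrix.sub_mulVec, G₂.lapMatrix_mulVec_const_eq_zero, Matrix.smul_mulVec,
      Matrix.one_mulVec]
    ext u; simp
  have h2 : M⁻¹ *ᵥ (fun _ => (1:ℝ)) = fun _ => t⁻¹ := by
    have h3 : M⁻¹ *ᵥ (M *ᵥ (fun _ => (1:ℝ))) = fun _ => (1:ℝ) := by
      rw [Matrix.mulVec_mulVec, Matrix.nonsing_inv_mul _ hdet, Matrix.one_mulVec]
    rw [h1] at h3
    have h4 : (fun _ => t) = t • (fun _ : V₂ => (1:ℝ)) := by ext u; simp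
    rw [h4, Matrix.mulVec_smul] at h3
    ext u
    have := congrFun h3 u
    simp only [Pi.smul_apply, smul_eq_mul] at this
    exact eq_inv_of_mul_eq_one_right this
  calc ∑ u, ∑ w, M⁻¹ u w = ∑ u, (M⁻¹ *ᵥ (fun _ => (1:ℝ))) u := by
        refine Finset.sum_congr rfl fun u _ => ?_
        simp [Matrix.mulVec, dotProduct]
    _ = ∑ _u : V₂, t⁻¹ := by rw [h2]
    _ = (Fintype.card V₂ : ℝ) * t⁻¹ := by simp [Finset.sum_const, mul_comm]

end NC

/-- Corollary 2.10: for `G₁` an `r₁`-regular graph on `n₁ ≥ 2` vertices and `G₂` arbitrary on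
`n₂ ≥ 1` vertices, the Laplacian spectrum of `G₁ ⋆ G₂` consists of `r₁ + μᵢ(G₂)` with
multiplicity `n₁` for each `i = 2, …, n₂`, together with, for each Laplacian eigenvalue
`μⱼ(G₁)`, the two values
`((n₂+1)r₁ + μⱼ(G₁) ± √(((n₂+1)r₁ + μⱼ(G₁))² - 4μⱼ(G₁)((2n₂+1)r₁ - n₂μⱼ(G₁))))/2`. -/
theorem ncorona_lap_spectrum {V₁ V₂ : Type*} [Fintype V₁] [Fintype V₂]
    [DecidableEq V₁] [DecidableEq V₂]
    (G₁ : SimpleGraph V₁) (G₂ : SimpleGraph V₂)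
    [DecidableRel G₁.Adj] [DecidableRel G₂.Adj]
    (n₁ n₂ r₁ : ℕ) (h₁ : Fintype.card V₁ = n₁) (h₂ : Fintype.card V₂ = n₂)
    (hn₁ : 2 ≤ n₁) (hn₂ : 1 ≤ n₂) (hr₁ : 1 ≤ r₁) (hreg : G₁.IsRegularOfDegree r₁)
    (μ₁ : Fin n₁ → ℝ) (hμ₁ : Monotone μ₁)
    (hchar₁ : (G₁.lapMatrix ℝ).charpoly = ∏ j, (Polynomial.X - Polynomial.C (μ₁ j)))
    (μ₂ : Fin n₂ → ℝ) (hμ₂ : Monotone μ₂)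
    (hchar₂ : (G₂.lapMatrix ℝ).charpoly = ∏ i, (Polynomial.X - Polynomial.C (μ₂ i))) :
    ((ncorona G₁ G₂).lapMatrix ℝ).charpoly =
      (∏ i ∈ Finset.univ.filter (fun i : Fin n₂ => i.val ≠ 0),
          (Polynomial.X - Polynomial.C ((r₁ : ℝ) + μ₂ i))) ^ n₁ *
        ∏ j : Fin n₁,
          ((Polynomial.X - Polynomial.C
              ((((n₂ : ℝ) + 1) * r₁ + μ₁ j
                + Real.sqrt ((((n₂ : ℝ) + 1) * r₁ + μ₁ j) ^ 2
                  - 4 * μ₁ j * ((2 * (n₂ : ℝ) + 1) * r₁ - n₂ * μ₁ j))) / 2)) *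
            (Polynomial.X - Polynomial.C
              ((((n₂ : ℝ) + 1) * r₁ + μ₁ j
                - Real.sqrt ((((n₂ : ℝ) + 1) * r₁ + μ₁ j) ^ 2
                  - 4 * μ₁ j * ((2 * (n₂ : ℝ) + 1) * r₁ - n₂ * μ₁ j))) / 2))) := by
  classical
  -- basic real facts
  have hn₂' : (1:ℝ) ≤ (n₂:ℝ) := by exact_mod_cast hn₂
  have hr₁' : (1:ℝ) ≤ (r₁:ℝ) := by exact_mod_cast hr₁
  set i₀ : Fin n₂ := ⟨0, hn₂⟩ with hi₀
  have hμ0 : μ₂ i₀ = 0 := lap_mu_zero G₂ h₂ hn₂ μ₂ hμ₂ hchar₂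
  -- discriminant is nonnegative
  have hD : ∀ μ : ℝ, 0 ≤ (((n₂:ℝ) + 1) * r₁ + μ) ^ 2
      - 4 * μ * ((2 * (n₂:ℝ) + 1) * r₁ - n₂ * μ) := by
    intro μ
    nlinarith [sq_nonneg ((4*(n₂:ℝ)+1)*μ - (3*(n₂:ℝ)+1)*r₁), sq_nonneg ((n₂:ℝ)*r₁),
      mul_nonneg (by positivity : (0:ℝ) ≤ (n₂:ℝ)^3) (by positivity : (0:ℝ) ≤ (r₁:ℝ)^2)]
  apply Polynomial.eq_of_infinite_eval_eq
  have hfin : (Set.range fun i : Fin n₂ => (r₁:ℝ) + μ₂ i).Finite := Set.finite_range _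
  apply Set.Infinite.mono _ hfin.infinite_compl
  intro x hx
  simp only [Set.mem_compl_iff, Set.mem_range, not_exists] at hx
  simp only [Set.mem_setOf_eq]
  have hx' : ∀ i : Fin n₂, x - ((r₁:ℝ) + μ₂ i) ≠ 0 := fun i => sub_ne_zero.mpr (fun h => hx i h.symm)
  have ht : x - (r₁:ℝ) ≠ 0 := by
    have := hx' i₀; rw [hμ0] at this; simpa using this
  set t : ℝ := x - r₁ with hts
  set M : Matrix V₂ V₂ ℝ := t • (1 : Matrix V₂ V₂ ℝ) - G₂.lapMatrix ℝ with hMdef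
  have hdetM : M.det = ∏ i, (x - ((r₁:ℝ) + μ₂ i)) := by
    have h5 := my_eval_charpoly (G₂.lapMatrix ℝ) t
    rw [hchar₂, eval_prod] at h5
    rw [hMdef, ← h5]
    exact Finset.prod_congr rfl fun i _ => by simp [hts]; ring
  have hMne : M.det ≠ 0 := by
    rw [hdetM]; exact Finset.prod_ne_zero_iff.mpr fun i _ => hx' i
  have hMunit : IsUnit M.det := isUnit_iff_ne_zero.mpr hMne
  set S : ℝ := ∑ u, ∑ w, M⁻¹ u w with hSdef
  have hS : S = (n₂:ℝ) * t⁻¹ := by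
    rw [hSdef, hMdef, inv_entry_sum G₂ t ht (by rw [← hMdef]; exact hMunit), h₂]
  have hSne : S ≠ 0 := by
    rw [hS]
    exact mul_ne_zero (by positivity) (inv_ne_zero ht)
  -- LHS evaluation
  have hDet : IsUnit ((1 : Matrix V₁ V₁ ℝ) ⊗ₖ M).det := by
    rw [Matrix.det_kronecker, Matrix.det_one, one_pow, one_mul]
    exact hMunit.pow _
  haveI : Invertible ((1 : Matrix V₁ V₁ ℝ) ⊗ₖ M) := Matrix.invertibleOfIsUnitDet _ hDet
  have hinvOf : ⅟((1 : Matrix V₁ V₁ ℝ) ⊗ₖ M) = (1 : Matrix V₁ V₁ ℝ) ⊗ₖ M⁻¹ := by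
    rw [Matrix.invOf_eq_nonsing_inv, kron_one_inv M hMunit]
  have hLHS : eval x ((ncorona G₁ G₂).lapMatrix ℝ).charpoly
      = M.det ^ n₁ * ∏ j, ((-S) * μ₁ j ^ 2 + (2 * S * r₁ - 1) * μ₁ j
          + (x - (1 + (n₂:ℝ)) * r₁ + r₁ - S * r₁ ^ 2)) := by
    rw [my_eval_charpoly, ncorona_block G₁ G₂ n₂ r₁ h₂ hreg x, Matrix.det_fromBlocks₂₂,
      hinvOf, BDC_eq, ← hSdef, schur_form G₁ hreg x S,
      det_quadratic_real (G₁.lapMatrix ℝ) μ₁ hchar₁ _ _ _ (neg_ne_zero.mpr hSne),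
      Matrix.det_kronecker, Matrix.det_one, one_pow, one_mul, h₁]
  rw [hLHS]
  -- RHS evaluation
  simp only [eval_mul, eval_pow, eval_prod, eval_sub, eval_X, eval_C]
  -- split off the zero eigenvalue factor
  have hfe : Finset.univ.filter (fun i : Fin n₂ => i.val ≠ 0) = Finset.univ.erase i₀ := by
    ext i
    simp [Finset.mem_erase, Fin.ext_iff, hi₀]
  have hsplit : M.det = t * ∏ i ∈ Finset.univ.filter (fun i : Fin n₂ => i.val ≠ 0),
      (x - ((r₁:ℝ) + μ₂ i)) := by
    rw [hdetM, hfe, ← Finset.mul_prod_erase _ _ (Finset.mem_univ i₀), hμ0]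
    norm_num
    left; rfl
  set P : ℝ := ∏ i ∈ Finset.univ.filter (fun i : Fin n₂ => i.val ≠ 0), (x - ((r₁:ℝ) + μ₂ i)) with hP
  have hpow : t ^ n₁ = ∏ _j : Fin n₁, t := by simp
  have key : ∀ j : Fin n₁,
      t * ((-S) * μ₁ j ^ 2 + (2 * S * r₁ - 1) * μ₁ j + (x - (1 + (n₂:ℝ)) * r₁ + r₁ - S * r₁ ^ 2))
      = (x - (((n₂:ℝ) + 1) * r₁ + μ₁ j
            + Real.sqrt ((((n₂:ℝ) + 1) * r₁ + μ₁ j) ^ 2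
              - 4 * μ₁ j * ((2 * (n₂:ℝ) + 1) * r₁ - n₂ * μ₁ j))) / 2)
        * (x - (((n₂:ℝ) + 1) * r₁ + μ₁ j
            - Real.sqrt ((((n₂:ℝ) + 1) * r₁ + μ₁ j) ^ 2
              - 4 * μ₁ j * ((2 * (n₂:ℝ) + 1) * r₁ - n₂ * μ₁ j))) / 2) := by
    intro j
    set μ := μ₁ j with hμdef
    set s₀ : ℝ := ((n₂:ℝ) + 1) * r₁ + μ with hs₀
    set p : ℝ := μ * ((2 * (n₂:ℝ) + 1) * r₁ - (n₂:ℝ) * μ) with hp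
    have hsq : Real.sqrt (s₀ ^ 2 - 4 * μ * ((2 * (n₂:ℝ) + 1) * r₁ - n₂ * μ)) ^ 2
        = s₀ ^ 2 - 4 * μ * ((2 * (n₂:ℝ) + 1) * r₁ - n₂ * μ) := Real.sq_sqrt (hD μ)
    set sq : ℝ := Real.sqrt (s₀ ^ 2 - 4 * μ * ((2 * (n₂:ℝ) + 1) * r₁ - n₂ * μ)) with hsqd
    have hquad : (x - (s₀ + sq) / 2) * (x - (s₀ - sq) / 2) = x ^ 2 - s₀ * x + p := by
      have h6 : sq ^ 2 = s₀ ^ 2 - 4 * p := by rw [hsq, hp]; ring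
      linear_combination (-1/4 : ℝ) * h6
    rw [hquad, hS, hs₀, hp]
    field_simp
    ring
  calc M.det ^ n₁ * ∏ j, ((-S) * μ₁ j ^ 2 + (2 * S * r₁ - 1) * μ₁ j
          + (x - (1 + (n₂:ℝ)) * r₁ + r₁ - S * r₁ ^ 2))
      = P ^ n₁ * ∏ j, (t * ((-S) * μ₁ j ^ 2 + (2 * S * r₁ - 1) * μ₁ j
          + (x - (1 + (n₂:ℝ)) * r₁ + r₁ - S * r₁ ^ 2))) := by
        rw [hsplit, mul_pow, hpow, Finset.prod_mul_distrib]
        ring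
    _ = _ := by
        congr 1
        exact Finset.prod_congr rfl fun j _ => key j
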